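/- arXiv:1908.07071 — 3 statements merged into one kernel-verified Lean document; each statement's English description precedes it below -/
import Mathlib

section
/- (Lions' lemma, abstract version) Let V be a real inner product space with a symmetric positive definite bilinear form a(·,·), and let V₀, …, V_J be subspaces with V = V₀ + ⋯ + V_J. Let P_j : V → V_j denote the a-orthogonal projection onto V_j. Suppose c₀ > 0 is such that every u ∈ V admits a decomposition u = ∑ⱼ uⱼ with uⱼ ∈ Vⱼ and ∑ⱼ a(uⱼ, uⱼ) ≤ c₀⁻¹ a(u,u). Then c₀ a(u,u) ≤ ∑ⱼ a(Pⱼ u, u) for all u ∈ V. -/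
open RealInnerProductSpace

theorem stmt_3 {E : Type*} [NormedAddCommGroup E] [InnerProductSpace ℝ E]
    [FiniteDimensional ℝ E] {J : ℕ} (V : Fin (J + 1) → Submodule ℝ E)
    (hsum : (⨆ j, V j) = ⊤) (c₀ : ℝ) (hc₀ : 0 < c₀)
    (hdecomp : ∀ u : E, ∃ f : Fin (J + 1) → E,
      (∀ j, f j ∈ V j) ∧ u = ∑ j, f j ∧
      ∑ j, ⟪f j, f j⟫ ≤ c₀⁻¹ * ⟪u, u⟫) :
    ∀ u : E, c₀ * ⟪u, u⟫ ≤ ∑ j, ⟪((V j).orthogonalProjection u : E), u⟫ := by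
  intro u
  obtain ⟨f, hf, hu, hsum2⟩ := hdecomp u
  set P : Fin (J + 1) → E := fun j => ((V j).orthogonalProjection u : E) with hP
  have hS : ∑ j, ⟪P j, u⟫ = ∑ j, ‖P j‖ ^ 2 := by
    refine Finset.sum_congr rfl fun j _ => ?_
    have hz : ⟪u - P j, P j⟫ = 0 :=
      Submodule.starProjection_inner_eq_zero u (P j) ((V j).orthogonalProjection u).2
    rw [inner_sub_left] at hz
    have h1 := real_inner_comm (P j) u
    have h2 := real_inner_self_eq_norm_sq (P j)
    linarith
  -- key: ⟪u,u⟫ = ∑ ⟪f j, P j⟫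
  have hkey : ⟪u, u⟫ = ∑ j, ⟪f j, P j⟫ := by
    calc ⟪u, u⟫ = ∑ j, ⟪f j, u⟫ := by rw [hu, sum_inner]
    _ = ∑ j, ⟪f j, P j⟫ := by
        refine Finset.sum_congr rfl fun j _ => ?_
        have hz : ⟪u - P j, f j⟫ = 0 :=
          Submodule.starProjection_inner_eq_zero u (f j) (hf j)
        rw [inner_sub_left] at hz
        have h1 := real_inner_comm (f j) u
        have h2 := real_inner_comm (f j) (P j)
        linarith
  have hCS : ⟪u, u⟫ ^ 2 ≤ (∑ j, ‖f j‖ ^ 2) * ∑ j, ‖P j‖ ^ 2 := by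
    have h1 : ⟪u, u⟫ ≤ ∑ j, ‖f j‖ * ‖P j‖ := by
      rw [hkey]
      exact Finset.sum_le_sum fun j _ => real_inner_le_norm _ _
    have h2 : (∑ j, ‖f j‖ * ‖P j‖) ^ 2 ≤ (∑ j, ‖f j‖ ^ 2) * ∑ j, ‖P j‖ ^ 2 :=
      Finset.sum_mul_sq_le_sq_mul_sq _ _ _
    have hnn : (0:ℝ) ≤ ⟪u, u⟫ := real_inner_self_nonneg
    calc ⟪u, u⟫ ^ 2 ≤ (∑ j, ‖f j‖ * ‖P j‖) ^ 2 := by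
          apply pow_le_pow_left₀ hnn h1
    _ ≤ _ := h2
  have hfsum : ∑ j, ‖f j‖ ^ 2 ≤ c₀⁻¹ * ⟪u, u⟫ := by
    refine le_trans (le_of_eq ?_) hsum2
    exact Finset.sum_congr rfl fun j _ => (real_inner_self_eq_norm_sq _).symm
  rcases eq_or_lt_of_le (real_inner_self_nonneg : (0:ℝ) ≤ ⟪u, u⟫) with h0 | h0
  · rw [hS, ← h0, mul_zero]
    exact Finset.sum_nonneg fun j _ => sq_nonneg _
  · rw [hS]
    have hPnn : (0:ℝ) ≤ ∑ j, ‖P j‖ ^ 2 := Finset.sum_nonneg fun j _ => sq_nonneg _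
    have : ⟪u, u⟫ ^ 2 ≤ (c₀⁻¹ * ⟪u, u⟫) * ∑ j, ‖P j‖ ^ 2 :=
      le_trans hCS (mul_le_mul_of_nonneg_right hfsum hPnn)
    rw [pow_two] at this
    have h3 : ⟪u, u⟫ ≤ c₀⁻¹ * ∑ j, ‖P j‖ ^ 2 := by
      have := le_of_mul_le_mul_right (by linarith [this] : ⟪u, u⟫ * ⟪u, u⟫ ≤ (c₀⁻¹ * ∑ j, ‖P j‖ ^ 2) * ⟪u, u⟫) h0
      exact this
    calc c₀ * ⟪u, u⟫ ≤ c₀ * (c₀⁻¹ * ∑ j, ‖P j‖ ^ 2) := by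
          exact mul_le_mul_of_nonneg_left h3 hc₀.le
    _ = ∑ j, ‖P j‖ ^ 2 := by field_simp
end

section
/- (IP–BR2 penalty term equivalence, one direction) Let r_e be the lifting operator defined by ∫_Ω r_e(φ)·τ dx = −∫_e φ·{τ} ds for all τ in the discrete vector-valued space, and assume the inverse trace inequality ‖v_B‖²_{L²(K)} ≤ C (h/p²) ‖v_B‖²_{L²(∂K)} for functions v_B vanishing at interior Gauss-Lobatto nodes. Then the jump of any v in the DG space satisfies (p²/h) ‖[[v]]‖²_{L²(e)} ≤ C′ ‖r_e([[v]])‖²_{L²(Ω)} with C′ independent of h and p. -/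
open RealInnerProductSpace

theorem stmt_15 {W F : Type*} [NormedAddCommGroup W] [InnerProductSpace ℝ W]
    [NormedAddCommGroup F] [InnerProductSpace ℝ F]
    (r : F →ₗ[ℝ] W) (avg : W →ₗ[ℝ] F)
    (hr : ∀ (φ : F) (τ : W), ⟪r φ, τ⟫ = -⟪φ, avg τ⟫)
    (C h p : ℝ) (hC : 0 < C) (hh : 0 < h) (hp : 0 < p)
    (jv : F) (ext : W)
    (hext : ⟪jv, avg ext⟫ = ‖jv‖ ^ 2)
    (htrace : ‖ext‖ ^ 2 ≤ C * (h / p ^ 2) * ‖jv‖ ^ 2) :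
    (p ^ 2 / h) * ‖jv‖ ^ 2 ≤ C * ‖r jv‖ ^ 2 := by
  by_cases hjv : jv = 0
  · simp [hjv]
  have hn : 0 < ‖jv‖ := norm_pos_iff.mpr hjv
  have h1 : ‖jv‖ ^ 2 = -⟪r jv, ext⟫ := by rw [hr, hext, neg_neg]
  have h2 : ‖jv‖ ^ 2 ≤ ‖r jv‖ * ‖ext‖ := by
    rw [h1]
    calc -⟪r jv, ext⟫ ≤ |⟪r jv, ext⟫| := neg_le_abs _
      _ ≤ ‖r jv‖ * ‖ext‖ := abs_real_inner_le_norm _ _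
  have h3 : (‖jv‖ ^ 2) ^ 2 ≤ ‖r jv‖ ^ 2 * ‖ext‖ ^ 2 := by
    calc (‖jv‖ ^ 2) ^ 2 ≤ (‖r jv‖ * ‖ext‖) ^ 2 := by
          apply pow_le_pow_left₀ (by positivity) h2
      _ = ‖r jv‖ ^ 2 * ‖ext‖ ^ 2 := by ring
  have h4 : (‖jv‖ ^ 2) ^ 2 ≤ ‖r jv‖ ^ 2 * (C * (h / p ^ 2) * ‖jv‖ ^ 2) := by
    refine h3.trans (mul_le_mul_of_nonneg_left htrace (by positivity))
  have h5 : ‖jv‖ ^ 2 ≤ ‖r jv‖ ^ 2 * (C * (h / p ^ 2)) := by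
    have := mul_le_mul_of_nonneg_right h4 (le_of_lt (inv_pos.mpr (pow_pos hn 2)))
    calc ‖jv‖ ^ 2 = (‖jv‖ ^ 2) ^ 2 * (‖jv‖ ^ 2)⁻¹ := by
            field_simp
      _ ≤ ‖r jv‖ ^ 2 * (C * (h / p ^ 2) * ‖jv‖ ^ 2) * (‖jv‖ ^ 2)⁻¹ := this
      _ = ‖r jv‖ ^ 2 * (C * (h / p ^ 2)) := by field_simp
  have hp2 : (0:ℝ) < p ^ 2 := by positivity
  rw [div_mul_eq_mul_div, div_le_iff₀ hh]
  calc p ^ 2 * ‖jv‖ ^ 2 ≤ p ^ 2 * (‖r jv‖ ^ 2 * (C * (h / p ^ 2))) :=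
        mul_le_mul_of_nonneg_left h5 (le_of_lt hp2)
    _ = C * ‖r jv‖ ^ 2 * h := by field_simp
end

section
/- (Two-subspace additive Schwarz stability) Let V = V₁ + V₂ be a finite-dimensional space with inner product a(·,·), and suppose there exists γ ≥ 1 such that every u ∈ V can be written u = u₁ + u₂ with uᵢ ∈ Vᵢ and a(u₁,u₁) + a(u₂,u₂) ≤ γ a(u,u). Then for the a-orthogonal projections P₁, P₂ onto V₁, V₂: γ⁻¹ a(u,u) ≤ a(P₁u,u) + a(P₂u,u) ≤ 2 a(u,u) for all u ∈ V. -/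
open RealInnerProductSpace

-- auxiliary lemma: inner product of a member of K with u equals inner with projection
lemma aux_inner_proj {E : Type*} [NormedAddCommGroup E] [InnerProductSpace ℝ E]
    [FiniteDimensional ℝ E] (K : Submodule ℝ E) (u v : E) (hv : v ∈ K) :
    ⟪v, u⟫ = ⟪v, (Submodule.orthogonalProjectionOnto K u : E)⟫ := by
  have h := Submodule.starProjection_inner_eq_zero u v hv
  have : ⟪v, u - (Submodule.orthogonalProjectionOnto K u : E)⟫ = 0 := by
    rw [real_inner_comm]; exact h
  rw [inner_sub_right] at this
  linarith

lemma aux_proj_self {E : Type*} [NormedAddCommGroup E] [InnerProductSpace ℝ E]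
    [FiniteDimensional ℝ E] (K : Submodule ℝ E) (u : E) :
    ⟪(Submodule.orthogonalProjectionOnto K u : E), u⟫ = ‖(Submodule.orthogonalProjectionOnto K u : E)‖ ^ 2 := by
  have := aux_inner_proj K u (Submodule.orthogonalProjectionOnto K u : E) (Submodule.orthogonalProjectionOnto K u).2
  rw [this, real_inner_self_eq_norm_sq]

lemma aux_proj_norm_le {E : Type*} [NormedAddCommGroup E] [InnerProductSpace ℝ E]
    [FiniteDimensional ℝ E] (K : Submodule ℝ E) (u : E) :
    ‖(Submodule.orthogonalProjectionOnto K u : E)‖ ^ 2 ≤ ‖u‖ ^ 2 := by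
  set p := (Submodule.orthogonalProjectionOnto K u : E)
  have hzero : ⟪p, u - p⟫ = 0 := by
    have h := Submodule.starProjection_inner_eq_zero u p (Submodule.orthogonalProjectionOnto K u).2
    rw [real_inner_comm]; exact h
  have : ‖u‖ ^ 2 = ‖p‖ ^ 2 + ‖u - p‖ ^ 2 := by
    have := norm_add_sq_real p (u - p)
    simp only [hzero, mul_zero, add_zero] at this
    simpa [add_sub_cancel] using this
  nlinarith [sq_nonneg ‖u - p‖]

theorem stmt_18 {E : Type*} [NormedAddCommGroup E] [InnerProductSpace ℝ E]
    [FiniteDimensional ℝ E]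
    (V₁ V₂ : Submodule ℝ E) (hsum : V₁ ⊔ V₂ = ⊤)
    (γ : ℝ) (hγ : 1 ≤ γ)
    (hdecomp : ∀ u : E, ∃ u₁ u₂ : E, u₁ ∈ V₁ ∧ u₂ ∈ V₂ ∧ u = u₁ + u₂ ∧
      ⟪u₁, u₁⟫ + ⟪u₂, u₂⟫ ≤ γ * ⟪u, u⟫) :
    ∀ u : E,
      γ⁻¹ * ⟪u, u⟫ ≤ ⟪(Submodule.orthogonalProjectionOnto V₁ u : E), u⟫
          + ⟪(Submodule.orthogonalProjectionOnto V₂ u : E), u⟫ ∧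
      ⟪(Submodule.orthogonalProjectionOnto V₁ u : E), u⟫
          + ⟪(Submodule.orthogonalProjectionOnto V₂ u : E), u⟫ ≤ 2 * ⟪u, u⟫ := by
  intro u
  set p₁ := (Submodule.orthogonalProjectionOnto V₁ u : E) with hp₁
  set p₂ := (Submodule.orthogonalProjectionOnto V₂ u : E) with hp₂
  have h1 : ⟪p₁, u⟫ = ‖p₁‖ ^ 2 := aux_proj_self V₁ u
  have h2 : ⟪p₂, u⟫ = ‖p₂‖ ^ 2 := aux_proj_self V₂ u
  have hle1 : ‖p₁‖ ^ 2 ≤ ‖u‖ ^ 2 := aux_proj_norm_le V₁ u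
  have hle2 : ‖p₂‖ ^ 2 ≤ ‖u‖ ^ 2 := aux_proj_norm_le V₂ u
  have huu : ⟪u, u⟫ = ‖u‖ ^ 2 := real_inner_self_eq_norm_sq u
  constructor
  · obtain ⟨u₁, u₂, hu₁, hu₂, hsplit, hbound⟩ := hdecomp u
    have e1 : ⟪u₁, u⟫ = ⟪u₁, p₁⟫ := aux_inner_proj V₁ u u₁ hu₁
    have e2 : ⟪u₂, u⟫ = ⟪u₂, p₂⟫ := aux_inner_proj V₂ u u₂ hu₂
    have esum : ⟪u, u⟫ = ⟪u₁, p₁⟫ + ⟪u₂, p₂⟫ := by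
      rw [← e1, ← e2]
      nth_rewrite 1 [hsplit]
      rw [inner_add_left]
    have cs1 : ⟪u₁, p₁⟫ ≤ ‖u₁‖ * ‖p₁‖ := real_inner_le_norm u₁ p₁
    have cs2 : ⟪u₂, p₂⟫ ≤ ‖u₂‖ * ‖p₂‖ := real_inner_le_norm u₂ p₂
    have hn1 : ⟪u₁, u₁⟫ = ‖u₁‖ ^ 2 := real_inner_self_eq_norm_sq u₁
    have hn2 : ⟪u₂, u₂⟫ = ‖u₂‖ ^ 2 := real_inner_self_eq_norm_sq u₂
    rw [hn1, hn2] at hbound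
    have hγ0 : 0 < γ := lt_of_lt_of_le one_pos hγ
    have hT : 0 ≤ ⟪u, u⟫ := real_inner_self_nonneg
    rw [h1, h2]
    rw [inv_mul_le_iff₀ hγ0]
    -- T ≤ γ * (‖p₁‖² + ‖p₂‖²), knowing T² ≤ (‖u₁‖²+‖u₂‖²)(‖p₁‖²+‖p₂‖²) ≤ γT·S
    rcases eq_or_lt_of_le hT with h0 | hpos
    · rw [← h0]
      positivity
    · have key : ⟪u, u⟫ ^ 2 ≤ (‖u₁‖ ^ 2 + ‖u₂‖ ^ 2) * (‖p₁‖ ^ 2 + ‖p₂‖ ^ 2) := by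
        nlinarith [sq_nonneg (‖u₁‖ * ‖p₂‖ - ‖u₂‖ * ‖p₁‖), norm_nonneg u₁, norm_nonneg u₂,
          norm_nonneg p₁, norm_nonneg p₂, mul_nonneg (norm_nonneg u₁) (norm_nonneg p₁),
          mul_nonneg (norm_nonneg u₂) (norm_nonneg p₂)]
      have key2 : ⟪u, u⟫ ^ 2 ≤ γ * ⟪u, u⟫ * (‖p₁‖ ^ 2 + ‖p₂‖ ^ 2) := by
        have hS : 0 ≤ ‖p₁‖ ^ 2 + ‖p₂‖ ^ 2 := by positivity
        nlinarith [mul_le_mul_of_nonneg_right hbound hS]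
      have := mul_le_mul_of_nonneg_left key2 (le_of_lt (inv_pos.mpr hpos))
      calc ⟪u, u⟫ = (⟪u, u⟫)⁻¹ * ⟪u, u⟫ ^ 2 := by field_simp
        _ ≤ (⟪u, u⟫)⁻¹ * (γ * ⟪u, u⟫ * (‖p₁‖ ^ 2 + ‖p₂‖ ^ 2)) := this
        _ = γ * (‖p₁‖ ^ 2 + ‖p₂‖ ^ 2) := by field_simp
  · rw [h1, h2, huu]; linarith
end
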